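/- Let g be a convex geometry on a finite set I and let F = (F_1,…,F_k) be an ordered partition of I into nonempty blocks; set A_i = F_1 ∪ … ∪ F_i and A_0 = ∅. Then the following are equivalent: (1) for every ordered partition G = (G_1,…,G_l) of I into nonempty blocks that refines F in order (i.e., there exist indices 0 = j_0 < j_1 < … < j_k = l with F_i = G_{j_{i−1}+1} ∪ … ∪ G_{j_i} for each 1 ≤ i ≤ k), every prefix union G_1 ∪ … ∪ G_m (1 ≤ m ≤ l) is convex; (2) each A_i (1 ≤ i ≤ k) is convex and each minor g_{A_{i−1}:A_i} (1 ≤ i ≤ k) is discrete. -/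

import Mathlib

/-- A (loopless) convex geometry on a finite ground set `I`: a closure operator
on subsets of `I` satisfying looplessness and the anti-exchange axiom. -/
structure ConvexGeometry (I : Type*) [DecidableEq I] [Fintype I] where
  cl : Finset I → Finset I
  subset_cl : ∀ A, A ⊆ cl A
  mono : ∀ ⦃A B : Finset I⦄, A ⊆ B → cl A ⊆ cl B
  idem : ∀ A, cl (cl A) = cl A
  loopless : cl ∅ = ∅
  antiExchange : ∀ (A : Finset I) (a b : I), a ≠ b → a ∉ cl A → b ∉ cl A →
    a ∈ cl (insert b A) → b ∉ cl (insert a A)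

variable {I : Type*} [DecidableEq I] [Fintype I]

/-- The set of extreme points of `K`: `Ex(K) = {a ∈ K : a ∉ g(K \ {a})}`. -/
def ConvexGeometry.Ex (g : ConvexGeometry I) (K : Finset I) : Finset I :=
  K.filter fun a => a ∉ g.cl (K.erase a)

private lemma biUnion_union' {α β : Type*} [DecidableEq α] [DecidableEq β]
    (s t : Finset α) (f : α → Finset β) :
    (s ∪ t).biUnion f = s.biUnion f ∪ t.biUnion f := by
  ext x
  simp only [Finset.mem_biUnion, Finset.mem_union]
  constructor
  · rintro ⟨a, (h | h), hx⟩
    · exact Or.inl ⟨a, h, hx⟩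
    · exact Or.inr ⟨a, h, hx⟩
  · rintro (⟨a, h, hx⟩ | ⟨a, h, hx⟩)
    · exact ⟨a, Or.inl h, hx⟩
    · exact ⟨a, Or.inr h, hx⟩

/-- for an ordered partition `F = (F_0,…,F_{k-1})` of `I` into
nonempty blocks with prefix unions `A_i`, the following are equivalent:
(1) for every ordered partition `G` of `I` into nonempty blocks refining `F`
in order, every prefix union of `G` is convex;
(2) each `A_i` (`1 ≤ i ≤ k`) is convex and each minor `g_{A_i:A_{i+1}}`
(`0 ≤ i < k`) is discrete. -/
theorem stmt_13 (g : ConvexGeometry I) (k : ℕ) (F : ℕ → Finset I)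
    (hne : ∀ i < k, (F i).Nonempty)
    (hdisj : ∀ i < k, ∀ j < k, i ≠ j → Disjoint (F i) (F j))
    (hcov : (Finset.range k).biUnion F = Finset.univ)
    (A : ℕ → Finset I) (hA : ∀ i, A i = (Finset.range i).biUnion F) :
    (∀ (l : ℕ) (G : ℕ → Finset I) (j : ℕ → ℕ),
        (∀ m < l, (G m).Nonempty) →
        (∀ m < l, ∀ m' < l, m ≠ m' → Disjoint (G m) (G m')) →
        (Finset.range l).biUnion G = Finset.univ →
        j 0 = 0 → j k = l → (∀ i < k, j i < j (i + 1)) →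
        (∀ i < k, F i = (Finset.Ico (j i) (j (i + 1))).biUnion G) →
        ∀ m, 1 ≤ m → m ≤ l →
          g.cl ((Finset.range m).biUnion G) = (Finset.range m).biUnion G) ↔
      ((∀ i, 1 ≤ i → i ≤ k → g.cl (A i) = A i) ∧
        ∀ i < k, ∀ B ⊆ A (i + 1) \ A i,
          g.cl (A i ∪ B) ∩ (A (i + 1) \ A i) = B) := by
  -- basic facts
  have hAsucc : ∀ i, A (i + 1) = A i ∪ F i := by
    intro i
    rw [hA, hA, Finset.range_add_one, Finset.biUnion_insert, Finset.union_comm]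
  have hdisjAF : ∀ i < k, Disjoint (A i) (F i) := by
    intro i hik
    rw [hA, Finset.disjoint_biUnion_left]
    intro i' hi'
    rw [Finset.mem_range] at hi'
    exact hdisj i' (hi'.trans hik) i hik (Nat.ne_of_lt hi')
  have hFi : ∀ i < k, A (i + 1) \ A i = F i := by
    intro i hik
    rw [hAsucc i, Finset.union_sdiff_cancel_left (hdisjAF i hik)]
  constructor
  · intro h1
    have hconv : ∀ i ≤ k, g.cl (A i) = A i := by
      intro i hik
      rcases Nat.eq_zero_or_pos i with rfl | hi
      · simp only [hA, Finset.range_zero, Finset.biUnion_empty]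
        exact g.loopless
      · have := h1 k F id hne hdisj hcov rfl rfl (fun i' _ => Nat.lt_succ_self i')
          (fun i' _ => by simp [Nat.Ico_succ_singleton]) i hi hik
        rw [hA]
        exact this
    refine ⟨fun i _ hik => hconv i hik, ?_⟩
    intro i hik B hB
    rw [hFi i hik] at hB ⊢
    apply Finset.Subset.antisymm
    · intro x hx
      rw [Finset.mem_inter] at hx
      obtain ⟨hxcl, hxF⟩ := hx
      by_contra hxB
      by_cases hsing : (F i).erase x = ∅
      · -- F i = {x}, so B = ∅ and x ∈ cl (A i) = A i, contradiction
        have hBempty : B = ∅ := by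
          rw [Finset.eq_empty_iff_forall_notMem]
          intro y hy
          have hyF := hB hy
          have : y ≠ x := fun h => hxB (h ▸ hy)
          have : y ∈ (F i).erase x := Finset.mem_erase.mpr ⟨this, hyF⟩
          rw [hsing] at this
          exact absurd this (Finset.notMem_empty y)
        rw [hBempty, Finset.union_empty] at hxcl
        rw [hconv i (le_of_lt hik)] at hxcl
        exact (Finset.disjoint_left.mp (hdisjAF i hik)) hxcl hxF
      · -- split F i into (F i).erase x and {x}
        set G' : ℕ → Finset I := fun m =>
          if m < i then F m else if m = i then (F i).erase x
          else if m = i + 1 then {x} else F (m - 1) with hG'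
        set j' : ℕ → ℕ := fun i' => if i' ≤ i then i' else i' + 1 with hj'
        have hG'lt : ∀ m, m < i → G' m = F m := by
          intro m hm; simp only [hG', if_pos hm]
        have hG'i : G' i = (F i).erase x := by
          simp only [hG']; rw [if_neg (lt_irrefl i)]; simp
        have hG'i1 : G' (i + 1) = {x} := by
          simp only [hG']
          rw [if_neg (by omega), if_neg (by omega : ¬ i + 1 = i)]; simp
        have hG'gt : ∀ m, i + 1 < m → G' m = F (m - 1) := by
          intro m hm
          simp only [hG']
          rw [if_neg (by omega), if_neg (by omega), if_neg (by omega)]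
        -- G' m ⊆ F (σ m)
        have hG'sub : ∀ m < k + 1, G' m ⊆ F (if m ≤ i then m else m - 1) := by
          intro m hm
          rcases lt_trichotomy m i with h | heq | h
          · rw [hG'lt m h, if_pos (le_of_lt h)]
          · rw [heq, hG'i, if_pos (le_refl i)]
            exact Finset.erase_subset x (F i)
          · rw [if_neg (by omega)]
            rcases Nat.lt_or_ge (i + 1) m with h2 | h2
            · rw [hG'gt m h2]
            · have : m = i + 1 := by omega
              subst this
              rw [hG'i1]
              simp only [Nat.add_sub_cancel]
              intro y hy
              rw [Finset.mem_singleton] at hy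
              exact hy ▸ hxF
        have key := h1 (k + 1) G' j'
          (by -- nonempty
            intro m hm
            rcases lt_trichotomy m i with h | heq | h
            · rw [hG'lt m h]; exact hne m (by omega)
            · rw [heq, hG'i]; exact Finset.nonempty_iff_ne_empty.mpr hsing
            · rcases Nat.lt_or_ge (i + 1) m with h2 | h2
              · rw [hG'gt m h2]; exact hne (m - 1) (by omega)
              · have heq : m = i + 1 := by omega
                rw [heq, hG'i1]; exact Finset.singleton_nonempty x)
          (by -- disjoint
            intro m hm m' hm' hmm'
            have h1' := hG'sub m hm
            have h2' := hG'sub m' hm'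
            set a := if m ≤ i then m else m - 1 with ha
            set b := if m' ≤ i then m' else m' - 1 with hb
            by_cases hab : a = b
            · -- must be {m, m'} = {i, i+1}
              have : (m = i ∧ m' = i + 1) ∨ (m = i + 1 ∧ m' = i) := by
                simp only [ha, hb] at hab
                split_ifs at hab with c1 c2 c2 <;> omega
              rcases this with ⟨rfl, rfl⟩ | ⟨rfl, rfl⟩
              · rw [hG'i, hG'i1]
                simp [Finset.disjoint_singleton_right]
              · rw [hG'i, hG'i1]
                simp [Finset.disjoint_singleton_left]
            · have hak : a < k := by simp only [ha]; split_ifs <;> omega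
              have hbk : b < k := by simp only [hb]; split_ifs <;> omega
              exact (hdisj a hak b hbk hab).mono h1' h2')
          (by -- cover
            apply Finset.eq_univ_of_forall
            intro y
            have : y ∈ (Finset.range k).biUnion F := hcov ▸ Finset.mem_univ y
            rw [Finset.mem_biUnion] at this ⊢
            obtain ⟨i', hi', hy⟩ := this
            rw [Finset.mem_range] at hi'
            rcases lt_trichotomy i' i with h | heq | h
            · exact ⟨i', Finset.mem_range.mpr (by omega), by rw [hG'lt i' h]; exact hy⟩
            · rw [heq] at hy
              by_cases hyx : y = x
              · exact ⟨i + 1, Finset.mem_range.mpr (by omega),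
                  by rw [hG'i1]; exact Finset.mem_singleton.mpr hyx⟩
              · exact ⟨i, Finset.mem_range.mpr (by omega),
                  by rw [hG'i]; exact Finset.mem_erase.mpr ⟨hyx, hy⟩⟩
            · exact ⟨i' + 1, Finset.mem_range.mpr (by omega),
                by rw [hG'gt (i' + 1) (by omega)]; simpa using hy⟩)
          (by simp [hj'])
          (by simp only [hj']; rw [if_neg (by omega)])
          (by intro i' _; simp only [hj']; split_ifs <;> omega)
          (by -- blocks
            intro i' hi'
            rcases lt_trichotomy i' i with h | heq | h
            · simp only [hj']
              rw [if_pos (le_of_lt h), if_pos (by omega), Nat.Ico_succ_singleton,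
                Finset.singleton_biUnion, hG'lt i' h]
            · rw [heq]
              simp only [hj']
              rw [if_pos (le_refl i), if_neg (by omega)]
              have : Finset.Ico i (i + 1 + 1) = {i, i + 1} := by
                ext y; simp [Finset.mem_Ico]; omega
              rw [this]
              rw [Finset.biUnion_insert, Finset.singleton_biUnion, hG'i, hG'i1,
                Finset.union_comm, ← Finset.insert_eq, Finset.insert_erase hxF]
            · simp only [hj']
              rw [if_neg (by omega), if_neg (by omega)]
              rw [Nat.Ico_succ_singleton, Finset.singleton_biUnion, hG'gt (i' + 1) (by omega)]
              simp)
          (i + 1) (by omega) (by omega)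
        -- key : cl (range (i+1)).biUnion G' = (range (i+1)).biUnion G'
        have hpre : (Finset.range (i + 1)).biUnion G' = A i ∪ (F i).erase x := by
          rw [Finset.range_add_one, Finset.biUnion_insert, hG'i, Finset.union_comm]
          congr 1
          rw [hA]
          exact Finset.biUnion_congr rfl (fun m hm => hG'lt m (Finset.mem_range.mp hm))
        rw [hpre] at key
        have hsub : A i ∪ B ⊆ A i ∪ (F i).erase x := by
          apply Finset.union_subset_union_right
          intro y hy
          exact Finset.mem_erase.mpr ⟨fun h => hxB (h ▸ hy), hB hy⟩
        have : x ∈ A i ∪ (F i).erase x := key ▸ (g.mono hsub) hxcl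
        rw [Finset.mem_union] at this
        rcases this with h | h
        · exact (Finset.disjoint_left.mp (hdisjAF i hik)) h hxF
        · exact (Finset.mem_erase.mp h).1 rfl
    · intro x hx
      exact Finset.mem_inter.mpr ⟨g.subset_cl _ (Finset.mem_union_right _ hx), hB hx⟩
  · rintro ⟨hconv, hdisc⟩ l G j hGne hGdisj hGcov hj0 hjk hjmono hFblocks m hm1 hml
    -- prefix identity
    have hprefA : ∀ i ≤ k, (Finset.range (j i)).biUnion G = A i := by
      intro i hik
      induction i with
      | zero => rw [hj0]; simp [hA]
      | succ n ih =>
        have hn : n < k := by omega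
        have hrange : Finset.range (j (n + 1)) =
            Finset.range (j n) ∪ Finset.Ico (j n) (j (n + 1)) := by
          rw [Finset.range_eq_Ico, Finset.range_eq_Ico,
            Finset.Ico_union_Ico_eq_Ico (Nat.zero_le _) (le_of_lt (hjmono n hn))]
        rw [hrange, biUnion_union', ih (by omega), ← hFblocks n hn, hAsucc n]
    -- find i with j i < m ≤ j (i+1)
    have hk1 : 1 ≤ k := by
      by_contra h
      have : k = 0 := by omega
      subst this
      rw [← hjk, hj0] at hml
      omega
    have hlm : m ≤ j k := hjk ▸ hml
    classical
    have hP0 : j 0 < m := by omega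
    set i := Nat.findGreatest (fun i => j i < m) k with hi
    have hPi : j i < m := by
      rw [hi]
      exact Nat.findGreatest_spec (P := fun i => j i < m) (Nat.zero_le k) hP0
    have hik : i < k := by
      rcases Nat.lt_or_ge i k with h | h
      · exact h
      · exfalso
        have : i ≤ k := Nat.findGreatest_le k
        have : i = k := by omega
        rw [this] at hPi
        omega
    have hmj1 : m ≤ j (i + 1) := by
      by_contra h
      push_neg at h
      have := Nat.le_findGreatest (P := fun i => j i < m) (by omega : i + 1 ≤ k) h
      omega
    -- P_m = A i ∪ B
    set B := (Finset.Ico (j i) m).biUnion G with hBdef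
    have hPm : (Finset.range m).biUnion G = A i ∪ B := by
      have : Finset.range m = Finset.range (j i) ∪ Finset.Ico (j i) m := by
        rw [Finset.range_eq_Ico, Finset.range_eq_Ico,
          Finset.Ico_union_Ico_eq_Ico (Nat.zero_le _) (le_of_lt hPi)]
      rw [this, biUnion_union', hprefA i (le_of_lt hik)]
    have hBF : B ⊆ F i := by
      rw [hFblocks i hik]
      exact Finset.biUnion_subset_biUnion_of_subset_left G
        (Finset.Ico_subset_Ico (le_refl _) hmj1)
    have h2 := hdisc i hik B (by rw [hFi i hik]; exact hBF)
    rw [hFi i hik] at h2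
    have hsubA1 : A i ∪ B ⊆ A (i + 1) := by
      rw [hAsucc i]
      exact Finset.union_subset_union_right hBF
    have hclsub : g.cl (A i ∪ B) ⊆ A (i + 1) := by
      have := g.mono hsubA1
      rwa [hconv (i + 1) (by omega) (by omega)] at this
    rw [hPm]
    apply Finset.Subset.antisymm
    · intro x hx
      have hx1 : x ∈ A (i + 1) := hclsub hx
      rw [hAsucc i, Finset.mem_union] at hx1
      rcases hx1 with h | h
      · exact Finset.mem_union_left _ h
      · have : x ∈ g.cl (A i ∪ B) ∩ F i := Finset.mem_inter.mpr ⟨hx, h⟩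
        rw [h2] at this
        exact Finset.mem_union_right _ this
    · exact g.subset_cl _
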